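/- (Explicit global harmonic morphism.) For every m ≥ 3, the map φ : ℂ^m → ℂ defined by φ(q) = (q^1 − q^m q̄^2)(q^2 + q^m q̄^1) · q^3 q^4 ⋯ q^{m−1} (the product q^3⋯q^{m−1} being empty, i.e. equal to 1, when m = 3) satisfies Δφ = 0 and Σ_{i=1}^{2m} (∂φ/∂x^i)² = 0 at every point of ℂ^m ≅ ℝ^{2m}; i.e. φ is a globally defined harmonic morphism. -/

import Mathlib

open Complex BigOperators Matrix

/-- Partial derivative in the direction of the real coordinate `x^{2j-1}`,
identifying `ℝ^{2m} ≅ ℂ^m` via `q^j = x^{2j-1} + i x^{2j}`. -/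
noncomputable def pdRe {m : ℕ} (f : (Fin m → ℂ) → ℂ) (j : Fin m) (x : Fin m → ℂ) : ℂ :=
  fderiv ℝ f x (Pi.single j 1)

/-- Partial derivative in the direction of the real coordinate `x^{2j}`. -/
noncomputable def pdIm {m : ℕ} (f : (Fin m → ℂ) → ℂ) (j : Fin m) (x : Fin m → ℂ) : ℂ :=
  fderiv ℝ f x (Pi.single j Complex.I)

/-- Wirtinger derivative `∂f/∂q^j = ½(∂f/∂x^{2j-1} − i ∂f/∂x^{2j})`. -/
noncomputable def wdq {m : ℕ} (f : (Fin m → ℂ) → ℂ) (j : Fin m) (x : Fin m → ℂ) : ℂ :=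
  (pdRe f j x - Complex.I * pdIm f j x) / 2

/-- Wirtinger derivative `∂f/∂q̄^j = ½(∂f/∂x^{2j-1} + i ∂f/∂x^{2j})`. -/
noncomputable def wdqbar {m : ℕ} (f : (Fin m → ℂ) → ℂ) (j : Fin m) (x : Fin m → ℂ) : ℂ :=
  (pdRe f j x + Complex.I * pdIm f j x) / 2

/-- Laplacian `Δf = Σ_{i=1}^{2m} ∂²f/(∂x^i)²`. -/
noncomputable def lap {m : ℕ} (f : (Fin m → ℂ) → ℂ) (x : Fin m → ℂ) : ℂ :=
  ∑ j, (pdRe (fun y => pdRe f j y) j x + pdIm (fun y => pdIm f j y) j x)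

/-- The horizontal weak conformality quantity `Σ_{i=1}^{2m} (∂f/∂x^i)²`. -/
noncomputable def hwc {m : ℕ} (f : (Fin m → ℂ) → ℂ) (x : Fin m → ℂ) : ℂ :=
  ∑ j, ((pdRe f j x) ^ 2 + (pdIm f j x) ^ 2)

/-- The explicit map `φ(q) = (q¹ − q^m q̄²)(q² + q^m q̄¹)·q³⋯q^{m−1}` (0-based
indices: `(q 0 − q (m−1)·conj (q 1))·(q 1 + q (m−1)·conj (q 0))` times the
product of `q j` over `2 ≤ j ≤ m − 2`, an empty product when `m = 3`). -/
noncomputable def phiGlobal (m : ℕ) (hm : 3 ≤ m) : (Fin m → ℂ) → ℂ :=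
  fun q =>
    (q ⟨0, by omega⟩ - q ⟨m - 1, by omega⟩ * starRingEnd ℂ (q ⟨1, by omega⟩)) *
    (q ⟨1, by omega⟩ + q ⟨m - 1, by omega⟩ * starRingEnd ℂ (q ⟨0, by omega⟩)) *
    ∏ j : Fin m, (if 2 ≤ (j : ℕ) ∧ (j : ℕ) ≤ m - 2 then q j else 1)

section AuxHM

noncomputable def cproj {m : ℕ} (i : Fin m) : (Fin m → ℂ) →L[ℝ] ℂ := ContinuousLinearMap.proj i
noncomputable def cconj {m : ℕ} (i : Fin m) : (Fin m → ℂ) →L[ℝ] ℂ :=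
  (Complex.conjCLE.toContinuousLinearMap).comp (ContinuousLinearMap.proj i)

lemma hasF_proj {m : ℕ} (i : Fin m) (y : Fin m → ℂ) :
    HasFDerivAt (fun y : Fin m → ℂ => y i) (cproj i) y := by
  exact (cproj i).hasFDerivAt

lemma hasF_conj {m : ℕ} (i : Fin m) (y : Fin m → ℂ) :
    HasFDerivAt (fun y : Fin m → ℂ => starRingEnd ℂ (y i)) (cconj i) y := by
  exact (cconj i).hasFDerivAt

noncomputable def DP {m : ℕ} (S : Finset (Fin m)) (y : Fin m → ℂ) : (Fin m → ℂ) →L[ℝ] ℂ :=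
  ∑ i ∈ S, (∏ k ∈ S.erase i, y k) • cproj i

lemma hasF_P {m : ℕ} (S : Finset (Fin m)) (y : Fin m → ℂ) :
    HasFDerivAt (fun y : Fin m → ℂ => ∏ k ∈ S, y k) (DP S y) y := by
  unfold DP; exact HasFDerivAt.finset_prod (fun i _ => hasF_proj i y)

section
variable {m : ℕ} (i0 i1 im : Fin m) (S : Finset (Fin m))

noncomputable def Af (y : Fin m → ℂ) : ℂ := y i0 - y im * starRingEnd ℂ (y i1)
noncomputable def Bf (y : Fin m → ℂ) : ℂ := y i1 + y im * starRingEnd ℂ (y i0)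
noncomputable def Pf (y : Fin m → ℂ) : ℂ := ∏ k ∈ S, y k

noncomputable def DA (y : Fin m → ℂ) : (Fin m → ℂ) →L[ℝ] ℂ :=
  cproj i0 - (y im • cconj i1 + starRingEnd ℂ (y i1) • cproj im)
noncomputable def DB (y : Fin m → ℂ) : (Fin m → ℂ) →L[ℝ] ℂ :=
  cproj i1 + (y im • cconj i0 + starRingEnd ℂ (y i0) • cproj im)

lemma hasF_A (y : Fin m → ℂ) : HasFDerivAt (Af i0 i1 im) (DA i0 i1 im y) y := by
  unfold Af DA
  exact (hasF_proj i0 y).sub ((hasF_proj im y).mul (hasF_conj i1 y))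

lemma hasF_B (y : Fin m → ℂ) : HasFDerivAt (Bf i0 i1 im) (DB i0 i1 im y) y := by
  unfold Bf DB
  exact (hasF_proj i1 y).add ((hasF_proj im y).mul (hasF_conj i0 y))

noncomputable def phif (y : Fin m → ℂ) : ℂ := Af i0 i1 im y * Bf i0 i1 im y * Pf S y

noncomputable def Dphi (y : Fin m → ℂ) : (Fin m → ℂ) →L[ℝ] ℂ :=
  (Af i0 i1 im y * Bf i0 i1 im y) • DP S y +
    Pf S y • (Af i0 i1 im y • DB i0 i1 im y + Bf i0 i1 im y • DA i0 i1 im y)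

lemma hasF_phi (y : Fin m → ℂ) :
    HasFDerivAt (phif i0 i1 im S) (Dphi i0 i1 im S y) y := by
  unfold phif Dphi
  exact ((hasF_A i0 i1 im y).mul (hasF_B i0 i1 im y)).mul (hasF_P S y)
end

section
variable {m : ℕ} {i0 i1 im : Fin m} {S : Finset (Fin m)}

lemma ev0 (h01 : i0 ≠ i1) (h0m : i0 ≠ im) (hS0 : i0 ∉ S) (y : Fin m → ℂ) (c : ℂ) :
    Dphi i0 i1 im S y (Pi.single i0 c) =
      Pf S y * (Af i0 i1 im y * (y im * starRingEnd ℂ c) + Bf i0 i1 im y * c) := by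
  simp only [Dphi, DA, DB, DP, cproj, cconj, ContinuousLinearMap.add_apply,
    ContinuousLinearMap.sub_apply, ContinuousLinearMap.smul_apply,
    ContinuousLinearMap.sum_apply, ContinuousLinearMap.coe_comp', Function.comp_apply,
    ContinuousLinearMap.proj_apply, ContinuousLinearEquiv.coe_coe, Complex.conjCLE_apply,
    smul_eq_mul]
  rw [Finset.sum_eq_zero (fun i hi => by
    have hne : i ≠ i0 := fun h => hS0 (h ▸ hi)
    simp [Pi.single_apply, hne])]
  simp [Pi.single_apply, Ne.symm h01, Ne.symm h0m]

lemma ev1 (h01 : i0 ≠ i1) (h1m : i1 ≠ im) (hS1 : i1 ∉ S) (y : Fin m → ℂ) (c : ℂ) :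
    Dphi i0 i1 im S y (Pi.single i1 c) =
      Pf S y * (Af i0 i1 im y * c - Bf i0 i1 im y * (y im * starRingEnd ℂ c)) := by
  simp only [Dphi, DA, DB, DP, cproj, cconj, ContinuousLinearMap.add_apply,
    ContinuousLinearMap.sub_apply, ContinuousLinearMap.smul_apply,
    ContinuousLinearMap.sum_apply, ContinuousLinearMap.coe_comp', Function.comp_apply,
    ContinuousLinearMap.proj_apply, ContinuousLinearEquiv.coe_coe, Complex.conjCLE_apply,
    smul_eq_mul]
  rw [Finset.sum_eq_zero (fun i hi => by
    have hne : i ≠ i1 := fun h => hS1 (h ▸ hi)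
    simp [Pi.single_apply, hne])]
  simp [Pi.single_apply, h01, Ne.symm h1m]
  exact Or.inl (by ring)

lemma evm (h0m : i0 ≠ im) (h1m : i1 ≠ im) (hSm : im ∉ S) (y : Fin m → ℂ) (c : ℂ) :
    Dphi i0 i1 im S y (Pi.single im c) =
      Pf S y * (Af i0 i1 im y * (starRingEnd ℂ (y i0) * c)
        - Bf i0 i1 im y * (starRingEnd ℂ (y i1) * c)) := by
  simp only [Dphi, DA, DB, DP, cproj, cconj, ContinuousLinearMap.add_apply,
    ContinuousLinearMap.sub_apply, ContinuousLinearMap.smul_apply,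
    ContinuousLinearMap.sum_apply, ContinuousLinearMap.coe_comp', Function.comp_apply,
    ContinuousLinearMap.proj_apply, ContinuousLinearEquiv.coe_coe, Complex.conjCLE_apply,
    smul_eq_mul]
  rw [Finset.sum_eq_zero (fun i hi => by
    have hne : i ≠ im := fun h => hSm (h ▸ hi)
    simp [Pi.single_apply, hne])]
  simp [Pi.single_apply, h0m, h1m]
  exact Or.inl (by ring)

lemma evS {j : Fin m} (hj0 : j ≠ i0) (hj1 : j ≠ i1) (hjm : j ≠ im) (y : Fin m → ℂ) (c : ℂ) :
    Dphi i0 i1 im S y (Pi.single j c) =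
      Af i0 i1 im y * Bf i0 i1 im y *
        (if j ∈ S then (∏ k ∈ S.erase j, y k) * c else 0) := by
  simp only [Dphi, DA, DB, DP, cproj, cconj, ContinuousLinearMap.add_apply,
    ContinuousLinearMap.sub_apply, ContinuousLinearMap.smul_apply,
    ContinuousLinearMap.sum_apply, ContinuousLinearMap.coe_comp', Function.comp_apply,
    ContinuousLinearMap.proj_apply, ContinuousLinearEquiv.coe_coe, Complex.conjCLE_apply,
    smul_eq_mul]
  simp [Pi.single_apply, hj0.symm, hj1.symm, hjm.symm, mul_ite, Finset.sum_ite_eq']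
end

section
variable {m : ℕ} {i0 i1 im : Fin m} {S : Finset (Fin m)}

lemma d2_0 (h01 : i0 ≠ i1) (h0m : i0 ≠ im) (hS0 : i0 ∉ S) (q : Fin m → ℂ) (c : ℂ) :
    fderiv ℝ (fun y => Pf S y *
        (Af i0 i1 im y * (y im * starRingEnd ℂ c) + Bf i0 i1 im y * c)) q (Pi.single i0 c) =
      Pf S q * (2 * (c * starRingEnd ℂ c) * q im) := by
  have h : HasFDerivAt (fun y => Pf S y *
      (Af i0 i1 im y * (y im * starRingEnd ℂ c) + Bf i0 i1 im y * c))
      (Pf S q • ((Af i0 i1 im q • (starRingEnd ℂ c • cproj im)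
          + (q im * starRingEnd ℂ c) • DA i0 i1 im q) + c • DB i0 i1 im q)
        + (Af i0 i1 im q * (q im * starRingEnd ℂ c) + Bf i0 i1 im q * c) • DP S q) q := by
    exact (hasF_P S q).mul (((hasF_A i0 i1 im q).mul
      ((hasF_proj im q).mul_const (starRingEnd ℂ c))).add ((hasF_B i0 i1 im q).mul_const c))
  rw [h.fderiv]
  simp only [DA, DB, DP, cproj, cconj, ContinuousLinearMap.add_apply,
    ContinuousLinearMap.sub_apply, ContinuousLinearMap.smul_apply,
    ContinuousLinearMap.sum_apply, ContinuousLinearMap.coe_comp', Function.comp_apply,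
    ContinuousLinearMap.proj_apply, ContinuousLinearEquiv.coe_coe, Complex.conjCLE_apply,
    smul_eq_mul]
  rw [Finset.sum_eq_zero (fun i hi => by
    have hne : i ≠ i0 := fun h => hS0 (h ▸ hi)
    simp [Pi.single_apply, hne])]
  simp [Pi.single_apply, Ne.symm h01, Ne.symm h0m]
  exact Or.inl (by ring)

lemma d2_1 (h01 : i0 ≠ i1) (h1m : i1 ≠ im) (hS1 : i1 ∉ S) (q : Fin m → ℂ) (c : ℂ) :
    fderiv ℝ (fun y => Pf S y *
        (Af i0 i1 im y * c - Bf i0 i1 im y * (y im * starRingEnd ℂ c))) q (Pi.single i1 c) =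
      -(Pf S q * (2 * (c * starRingEnd ℂ c) * q im)) := by
  have h : HasFDerivAt (fun y => Pf S y *
      (Af i0 i1 im y * c - Bf i0 i1 im y * (y im * starRingEnd ℂ c)))
      (Pf S q • (c • DA i0 i1 im q - (Bf i0 i1 im q • (starRingEnd ℂ c • cproj im)
          + (q im * starRingEnd ℂ c) • DB i0 i1 im q))
        + (Af i0 i1 im q * c - Bf i0 i1 im q * (q im * starRingEnd ℂ c)) • DP S q) q := by
    exact (hasF_P S q).mul (((hasF_A i0 i1 im q).mul_const c).sub
      ((hasF_B i0 i1 im q).mul ((hasF_proj im q).mul_const (starRingEnd ℂ c))))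
  rw [h.fderiv]
  simp only [DA, DB, DP, cproj, cconj, ContinuousLinearMap.add_apply,
    ContinuousLinearMap.sub_apply, ContinuousLinearMap.smul_apply,
    ContinuousLinearMap.sum_apply, ContinuousLinearMap.coe_comp', Function.comp_apply,
    ContinuousLinearMap.proj_apply, ContinuousLinearEquiv.coe_coe, Complex.conjCLE_apply,
    smul_eq_mul]
  rw [Finset.sum_eq_zero (fun i hi => by
    have hne : i ≠ i1 := fun h => hS1 (h ▸ hi)
    simp [Pi.single_apply, hne])]
  simp [Pi.single_apply, h01, Ne.symm h1m]
  ring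

lemma d2_m (h0m : i0 ≠ im) (h1m : i1 ≠ im) (hSm : im ∉ S) (q : Fin m → ℂ) (c : ℂ) :
    fderiv ℝ (fun y => Pf S y *
        (Af i0 i1 im y * (starRingEnd ℂ (y i0) * c)
          - Bf i0 i1 im y * (starRingEnd ℂ (y i1) * c))) q (Pi.single im c) =
      -(2 * c ^ 2 * starRingEnd ℂ (q i0) * starRingEnd ℂ (q i1) * Pf S q) := by
  have h : HasFDerivAt (fun y => Pf S y *
      (Af i0 i1 im y * (starRingEnd ℂ (y i0) * c)
        - Bf i0 i1 im y * (starRingEnd ℂ (y i1) * c)))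
      (Pf S q • ((Af i0 i1 im q • (c • cconj i0) + (starRingEnd ℂ (q i0) * c) • DA i0 i1 im q)
          - (Bf i0 i1 im q • (c • cconj i1) + (starRingEnd ℂ (q i1) * c) • DB i0 i1 im q))
        + (Af i0 i1 im q * (starRingEnd ℂ (q i0) * c)
            - Bf i0 i1 im q * (starRingEnd ℂ (q i1) * c)) • DP S q) q := by
    exact (hasF_P S q).mul
      (((hasF_A i0 i1 im q).mul ((hasF_conj i0 q).mul_const c)).sub
        ((hasF_B i0 i1 im q).mul ((hasF_conj i1 q).mul_const c)))
  rw [h.fderiv]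
  simp only [DA, DB, DP, cproj, cconj, ContinuousLinearMap.add_apply,
    ContinuousLinearMap.sub_apply, ContinuousLinearMap.smul_apply,
    ContinuousLinearMap.sum_apply, ContinuousLinearMap.coe_comp', Function.comp_apply,
    ContinuousLinearMap.proj_apply, ContinuousLinearEquiv.coe_coe, Complex.conjCLE_apply,
    smul_eq_mul]
  rw [Finset.sum_eq_zero (fun i hi => by
    have hne : i ≠ im := fun h => hSm (h ▸ hi)
    simp [Pi.single_apply, hne])]
  simp [Pi.single_apply, h0m, h1m]
  ring

lemma d2_S {j : Fin m} (hj0 : j ≠ i0) (hj1 : j ≠ i1) (hjm : j ≠ im) (q : Fin m → ℂ) (c : ℂ) :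
    fderiv ℝ (fun y => Af i0 i1 im y * Bf i0 i1 im y * ((∏ k ∈ S.erase j, y k) * c)) q
      (Pi.single j c) = 0 := by
  have h : HasFDerivAt (fun y => Af i0 i1 im y * Bf i0 i1 im y * ((∏ k ∈ S.erase j, y k) * c))
      ((Af i0 i1 im q * Bf i0 i1 im q) • (c • DP (S.erase j) q)
        + ((∏ k ∈ S.erase j, q k) * c) • (Af i0 i1 im q • DB i0 i1 im q
            + Bf i0 i1 im q • DA i0 i1 im q)) q := by
    exact ((hasF_A i0 i1 im q).mul (hasF_B i0 i1 im q)).mul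
      ((hasF_P (S.erase j) q).mul_const c)
  rw [h.fderiv]
  simp only [DA, DB, DP, cproj, cconj, ContinuousLinearMap.add_apply,
    ContinuousLinearMap.sub_apply, ContinuousLinearMap.smul_apply,
    ContinuousLinearMap.sum_apply, ContinuousLinearMap.coe_comp', Function.comp_apply,
    ContinuousLinearMap.proj_apply, ContinuousLinearEquiv.coe_coe, Complex.conjCLE_apply,
    smul_eq_mul]
  rw [Finset.sum_eq_zero (fun i hi => by
    have hne : i ≠ j := Finset.ne_of_mem_erase hi
    simp [Pi.single_apply, hne])]
  simp [Pi.single_apply, hj0.symm, hj1.symm, hjm.symm]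
end

lemma main_aux {m : ℕ} (i0 i1 im : Fin m) (S : Finset (Fin m))
    (h01 : i0 ≠ i1) (h0m : i0 ≠ im) (h1m : i1 ≠ im)
    (hS0 : i0 ∉ S) (hS1 : i1 ∉ S) (hSm : im ∉ S) (q : Fin m → ℂ) :
    lap (phif i0 i1 im S) q = 0 ∧ hwc (phif i0 i1 im S) q = 0 := by
  classical
  have efd : ∀ (y : Fin m → ℂ), fderiv ℝ (phif i0 i1 im S) y = Dphi i0 i1 im S y :=
    fun y => (hasF_phi i0 i1 im S y).fderiv
  have step : ∀ (j : Fin m) (c : ℂ),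
      fderiv ℝ (fun y => fderiv ℝ (phif i0 i1 im S) y (Pi.single j c)) q (Pi.single j c) =
        if j = i0 then Pf S q * (2 * (c * starRingEnd ℂ c) * q im)
        else if j = i1 then -(Pf S q * (2 * (c * starRingEnd ℂ c) * q im))
        else if j = im then
          -(2 * c ^ 2 * starRingEnd ℂ (q i0) * starRingEnd ℂ (q i1) * Pf S q)
        else 0 := by
    intro j c
    have h1 : (fun y => fderiv ℝ (phif i0 i1 im S) y (Pi.single j c)) =
        (fun y => Dphi i0 i1 im S y (Pi.single j c)) := funext fun y => by rw [efd y]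
    rw [h1]
    by_cases hj0 : j = i0
    · subst hj0
      have h2 : (fun y => Dphi j i1 im S y (Pi.single j c)) =
          (fun y => Pf S y * (Af j i1 im y * (y im * starRingEnd ℂ c) + Bf j i1 im y * c)) :=
        funext fun y => ev0 h01 h0m hS0 y c
      rw [h2, d2_0 h01 h0m hS0 q c, if_pos rfl]
    · by_cases hj1 : j = i1
      · subst hj1
        have h2 : (fun y => Dphi i0 j im S y (Pi.single j c)) =
            (fun y => Pf S y * (Af i0 j im y * c - Bf i0 j im y * (y im * starRingEnd ℂ c))) :=
          funext fun y => ev1 h01 h1m hS1 y c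
        rw [h2, d2_1 h01 h1m hS1 q c, if_neg hj0, if_pos rfl]
      · by_cases hjm : j = im
        · subst hjm
          have h2 : (fun y => Dphi i0 i1 j S y (Pi.single j c)) =
              (fun y => Pf S y * (Af i0 i1 j y * (starRingEnd ℂ (y i0) * c)
                - Bf i0 i1 j y * (starRingEnd ℂ (y i1) * c))) :=
            funext fun y => evm h0m h1m hSm y c
          rw [h2, d2_m h0m h1m hSm q c, if_neg hj0, if_neg hj1, if_pos rfl]
        · rw [if_neg hj0, if_neg hj1, if_neg hjm]
          by_cases hjS : j ∈ S
          · have h2 : (fun y => Dphi i0 i1 im S y (Pi.single j c)) =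
                (fun y => Af i0 i1 im y * Bf i0 i1 im y * ((∏ k ∈ S.erase j, y k) * c)) :=
              funext fun y => by rw [evS hj0 hj1 hjm y c, if_pos hjS]
            rw [h2, d2_S hj0 hj1 hjm q c]
          · have h2 : (fun y => Dphi i0 i1 im S y (Pi.single j c)) = (fun _ => (0:ℂ)) :=
              funext fun y => by rw [evS hj0 hj1 hjm y c, if_neg hjS, mul_zero]
            rw [h2, fderiv_fun_const]
            simp
  constructor
  · simp only [lap, pdRe, pdIm]
    have hterm : ∀ j : Fin m,
        fderiv ℝ (fun y => fderiv ℝ (phif i0 i1 im S) y (Pi.single j 1)) q (Pi.single j 1) +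
          fderiv ℝ (fun y => fderiv ℝ (phif i0 i1 im S) y (Pi.single j Complex.I)) q
            (Pi.single j Complex.I) =
        (if j = i0 then 4 * Pf S q * q im else 0) +
          (if j = i1 then -(4 * Pf S q * q im) else 0) := by
      intro j
      rw [step j 1, step j Complex.I]
      by_cases hj0 : j = i0
      · have : j ≠ i1 := hj0 ▸ h01
        simp only [if_pos hj0, if_neg this, _root_.map_one, Complex.conj_I]
        linear_combination (-2 * Pf S q * q im) * Complex.I_sq
      · by_cases hj1 : j = i1
        · simp only [if_neg hj0, if_pos hj1, _root_.map_one, Complex.conj_I]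
          linear_combination (2 * Pf S q * q im) * Complex.I_sq
        · by_cases hjm : j = im
          · simp only [if_neg hj0, if_neg hj1, if_pos hjm]
            linear_combination
              (-2 * starRingEnd ℂ (q i0) * starRingEnd ℂ (q i1) * Pf S q) * Complex.I_sq
          · simp [if_neg hj0, if_neg hj1, if_neg hjm]
    rw [Finset.sum_congr rfl (fun j _ => hterm j), Finset.sum_add_distrib]
    simp [Finset.sum_ite_eq']
  · simp only [hwc, pdRe, pdIm, efd q]
    have hterm : ∀ j : Fin m,
        (Dphi i0 i1 im S q (Pi.single j 1)) ^ 2 +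
          (Dphi i0 i1 im S q (Pi.single j Complex.I)) ^ 2 =
        (if j = i0 then 4 * Af i0 i1 im q * Bf i0 i1 im q * q im * (Pf S q) ^ 2 else 0) +
          (if j = i1 then -(4 * Af i0 i1 im q * Bf i0 i1 im q * q im * (Pf S q) ^ 2)
            else 0) := by
      intro j
      by_cases hj0 : j = i0
      · have hne : j ≠ i1 := hj0 ▸ h01
        subst hj0
        rw [ev0 h01 h0m hS0 q 1, ev0 h01 h0m hS0 q Complex.I, if_pos rfl, if_neg hne]
        simp only [_root_.map_one, Complex.conj_I, mul_one]
        linear_combination ((Pf S q) ^ 2 * (Bf j i1 im q - Af j i1 im q * q im) ^ 2) *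
          Complex.I_sq
      · by_cases hj1 : j = i1
        · subst hj1
          rw [ev1 h01 h1m hS1 q 1, ev1 h01 h1m hS1 q Complex.I, if_neg hj0, if_pos rfl]
          simp only [_root_.map_one, Complex.conj_I, mul_one]
          linear_combination ((Pf S q) ^ 2 * (Af i0 j im q + Bf i0 j im q * q im) ^ 2) *
            Complex.I_sq
        · rw [if_neg hj0, if_neg hj1]
          by_cases hjm : j = im
          · subst hjm
            rw [evm h0m h1m hSm q 1, evm h0m h1m hSm q Complex.I]
            linear_combination ((Pf S q) ^ 2 *
              (Af i0 i1 j q * starRingEnd ℂ (q i0) - Bf i0 i1 j q * starRingEnd ℂ (q i1)) ^ 2) *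
              Complex.I_sq
          · rw [evS hj0 hj1 hjm q 1, evS hj0 hj1 hjm q Complex.I]
            by_cases hjS : j ∈ S
            · rw [if_pos hjS, if_pos hjS]
              linear_combination
                ((Af i0 i1 im q * Bf i0 i1 im q * ∏ k ∈ S.erase j, q k) ^ 2) * Complex.I_sq
            · rw [if_neg hjS, if_neg hjS]
              simp
    rw [Finset.sum_congr rfl (fun j _ => hterm j), Finset.sum_add_distrib]
    simp [Finset.sum_ite_eq']

end AuxHM

/-- explicit global harmonic morphism: for every `m ≥ 3` the map
`φ(q) = (q¹ − q^m q̄²)(q² + q^m q̄¹)·q³⋯q^{m−1}` satisfies `Δφ = 0` and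
`Σ_{i=1}^{2m}(∂φ/∂x^i)² = 0` everywhere on `ℂ^m ≅ ℝ^{2m}`; i.e. it is a
globally defined harmonic morphism. -/
theorem explicit_global_harmonic_morphism {m : ℕ} (hm : 3 ≤ m) :
    ∀ q : Fin m → ℂ, lap (phiGlobal m hm) q = 0 ∧ hwc (phiGlobal m hm) q = 0 := by
  intro q
  have hphi : phiGlobal m hm = phif ⟨0, by omega⟩ ⟨1, by omega⟩ ⟨m - 1, by omega⟩
      ((Finset.univ : Finset (Fin m)).filter
        (fun j => 2 ≤ (j : ℕ) ∧ (j : ℕ) ≤ m - 2)) := by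
    funext y
    unfold phiGlobal phif Af Bf Pf
    rw [Finset.prod_filter]
  rw [hphi]
  exact main_aux _ _ _ _
    (by simp only [ne_eq, Fin.mk.injEq]; omega)
    (by simp only [ne_eq, Fin.mk.injEq]; omega)
    (by simp only [ne_eq, Fin.mk.injEq]; omega)
    (by simp only [Finset.mem_filter, Finset.mem_univ, true_and, not_and, not_le]; omega)
    (by simp only [Finset.mem_filter, Finset.mem_univ, true_and, not_and, not_le]; omega)
    (by simp only [Finset.mem_filter, Finset.mem_univ, true_and, not_and, not_le]; omega) q
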